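/- Let K be a cap with rotation angle ω ∈ (0, π/2]. Then the following are equivalent: (1) N(K) ⊆ K; (2) N(K) ⊆ K \ δK; (3) for every t ∈ (0, ω), either x_K(t) is not in the interior of F_ω or x_K(t) ∈ K; (4) the set K \ N(K) is connected. -/
import Mathlib


noncomputable section

open Real MeasureTheory Set Filter Topology

abbrev Pt := EuclideanSpace ℝ (Fin 2)

def mk2 (x y : ℝ) : Pt := (WithLp.equiv 2 (Fin 2 → ℝ)).symm ![x, y]

def dotp (p q : Pt) : ℝ := p 0 * q 0 + p 1 * q 1

def uvec (t : ℝ) : Pt := mk2 (Real.cos t) (Real.sin t)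

def vvec (t : ℝ) : Pt := mk2 (-Real.sin t) (Real.cos t)

def suppFn (K : Set Pt) (t : ℝ) : ℝ := sSup ((fun p => dotp p (uvec t)) '' K)

def suppLine (K : Set Pt) (t : ℝ) : Set Pt := {p | dotp p (uvec t) = suppFn K t}

def edge (K : Set Pt) (t : ℝ) : Set Pt := K ∩ suppLine K t

def vplus (K : Set Pt) (t : ℝ) : Pt :=
  suppFn K t • uvec t + sSup ((fun p => dotp p (vvec t)) '' edge K t) • vvec t

def vminus (K : Set Pt) (t : ℝ) : Pt :=
  suppFn K t • uvec t + sInf ((fun p => dotp p (vvec t)) '' edge K t) • vvec t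

def vinter (K : Set Pt) (a b : ℝ) : Pt :=
  mk2 ((suppFn K a * Real.sin b - suppFn K b * Real.sin a) / Real.sin (b - a))
      ((suppFn K b * Real.cos a - suppFn K a * Real.cos b) / Real.sin (b - a))

def IsConvexBody (K : Set Pt) : Prop := K.Nonempty ∧ IsCompact K ∧ Convex ℝ K

def Jset (ω : ℝ) : Set ℝ := Icc 0 ω ∪ Icc (π/2) (ω + π/2)

def IsCap (ω : ℝ) (K : Set Pt) : Prop :=
  IsConvexBody K ∧
  suppFn K ω = 1 ∧ suppFn K (π/2) = 1 ∧
  suppFn K (ω + π) = 0 ∧ suppFn K (3*π/2) = 0 ∧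
  K = ⋂ t ∈ Jset ω ∪ {ω + π, 3*π/2}, {p : Pt | dotp p (uvec t) ≤ suppFn K t}

def polyAngles (ω : ℝ) (Θ : Finset ℝ) : Set ℝ :=
  ↑Θ ∪ (fun s => s + π/2) '' ↑Θ ∪ {ω, π/2, ω + π, 3*π/2}

def IsPolyCap (ω : ℝ) (Θ : Finset ℝ) (K : Set Pt) : Prop :=
  IsCap ω K ∧ K = ⋂ t ∈ polyAngles ω Θ, {p : Pt | dotp p (uvec t) ≤ suppFn K t}

def Qminus (K : Set Pt) (t : ℝ) : Set Pt :=
  {p | dotp p (uvec t) < suppFn K t - 1 ∧ dotp p (uvec (t + π/2)) < suppFn K (t + π/2) - 1}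

def Qplus (K : Set Pt) (t : ℝ) : Set Pt :=
  {p | dotp p (uvec t) ≤ suppFn K t ∧ dotp p (uvec (t + π/2)) ≤ suppFn K (t + π/2)}

def hallway (S : Set Pt) (t : ℝ) : Set Pt := Qplus S t \ Qminus S t

def fan (ω : ℝ) : Set Pt := {p | 0 ≤ dotp p (uvec ω) ∧ 0 ≤ dotp p (uvec (π/2))}

def parall (ω : ℝ) : Set Pt :=
  {p | dotp p (uvec (π/2)) ∈ Icc (0:ℝ) 1 ∧ dotp p (uvec ω) ∈ Icc (0:ℝ) 1}

def innerCorner (K : Set Pt) (t : ℝ) : Pt :=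
  (suppFn K t - 1) • uvec t + (suppFn K (t + π/2) - 1) • vvec t

def outerCorner (K : Set Pt) (t : ℝ) : Pt :=
  suppFn K t • uvec t + suppFn K (t + π/2) • vvec t

def wedge (ω : ℝ) (K : Set Pt) (t : ℝ) : Set Pt := fan ω ∩ Qminus K t

def niche (ω : ℝ) (K : Set Pt) : Set Pt := fan ω ∩ ⋃ t ∈ Ioo 0 ω, Qminus K t

def polyNiche (ω : ℝ) (Θ : Finset ℝ) (K : Set Pt) : Set Pt :=
  parall ω ∩ ⋃ t ∈ Θ, Qminus K t

def upperBoundary (ω : ℝ) (K : Set Pt) : Set Pt := ⋃ t ∈ Icc 0 (ω + π/2), edge K t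

def area (X : Set Pt) : ℝ := (volume X).toReal

def Wpt (K : Set Pt) (t : ℝ) : Pt := mk2 ((suppFn K t - 1) / Real.cos t) 0

def Zpt (ω : ℝ) (K : Set Pt) (t : ℝ) : Pt :=
  ((suppFn K (t + π/2) - 1) / Real.sin (t + π/2 - ω)) • vvec ω

def wgap (K : Set Pt) (t : ℝ) : ℝ := dotp (vminus K 0 - Wpt K t) (uvec 0)

def zgap (ω : ℝ) (K : Set Pt) (t : ℝ) : ℝ := dotp (vplus K (ω + π/2) - Zpt ω K t) (vvec ω)

def wgapInf (ω : ℝ) (K : Set Pt) : ℝ := sInf (wgap K '' Ioo 0 ω)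

def zgapInf (ω : ℝ) (K : Set Pt) : ℝ := sInf (zgap ω K '' Ioo 0 ω)

def fplus (K : Set Pt) (t : ℝ) : ℝ := dotp (outerCorner K t - vplus K t) (vvec t)
def fminus (K : Set Pt) (t : ℝ) : ℝ := dotp (outerCorner K t - vminus K t) (vvec t)
def gplus (K : Set Pt) (t : ℝ) : ℝ := dotp (outerCorner K t - vplus K (t + π/2)) (uvec t)
def gminus (K : Set Pt) (t : ℝ) : ℝ := dotp (outerCorner K t - vminus K (t + π/2)) (uvec t)

def oPt (ω : ℝ) : Pt := mk2 (Real.tan (π/4 - ω/2)) 1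

def hplane (c : Bool) (t h : ℝ) : Set Pt :=
  if c then {p | dotp p (uvec t) ≤ h} else {p | dotp p (uvec t) < h}

namespace CapAux

lemma mk2_app0 (x y : ℝ) : mk2 x y 0 = x := rfl
lemma mk2_app1 (x y : ℝ) : mk2 x y 1 = y := rfl

lemma dotp_def (p q : Pt) : dotp p q = p 0 * q 0 + p 1 * q 1 := rfl

lemma decomp (p : Pt) (a m b : ℝ) :
    dotp p (uvec m) * Real.sin (b - a)
      = dotp p (uvec a) * Real.sin (b - m) + dotp p (uvec b) * Real.sin (m - a) := by
  simp only [dotp, uvec, mk2_app0, mk2_app1, Real.sin_sub]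
  ring

lemma expand_mid (p : Pt) (t s : ℝ) :
    dotp p (uvec s)
      = Real.cos (s - t) * dotp p (uvec t) + Real.sin (s - t) * dotp p (uvec (t + π/2)) := by
  simp only [dotp, uvec, mk2_app0, mk2_app1, Real.cos_sub, Real.sin_sub,
    Real.cos_add, Real.sin_add, Real.cos_pi_div_two, Real.sin_pi_div_two]
  linear_combination (-(p 0 * Real.cos s + p 1 * Real.sin s)) * (Real.sin_sq_add_cos_sq t)

lemma dotp_pi_shift (p : Pt) (x : ℝ) : dotp p (uvec (x + π)) = - dotp p (uvec x) := by
  simp only [dotp, uvec, mk2_app0, mk2_app1, Real.cos_add, Real.sin_add,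
    Real.cos_pi, Real.sin_pi]
  ring

lemma three_pi_half : (3*π/2 : ℝ) = π/2 + π := by ring

lemma corner_dot (K : Set Pt) (t s : ℝ) :
    dotp (innerCorner K t) (uvec s)
      = (suppFn K t - 1) * Real.cos (s - t) + (suppFn K (t + π/2) - 1) * Real.sin (s - t) := by
  simp only [innerCorner, dotp, uvec, vvec, mk2_app0, mk2_app1, PiLp.add_apply,
    PiLp.smul_apply, smul_eq_mul, Real.cos_sub, Real.sin_sub,
    Real.cos_add, Real.sin_add, Real.cos_pi_div_two, Real.sin_pi_div_two]
  ring

lemma continuous_eval (i : Fin 2) : Continuous (fun p : Pt => p i) := by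
  exact (continuous_apply i).comp (PiLp.continuous_ofLp 2 (fun _ : Fin 2 => ℝ))

lemma continuous_dotp (q : Pt) : Continuous (fun p : Pt => dotp p q) := by
  simp only [dotp]
  exact ((continuous_eval 0).mul continuous_const).add ((continuous_eval 1).mul continuous_const)

end CapAux
namespace CapAux

variable {ω : ℝ} {K : Set Pt}

lemma bddAboveImg (hK : IsCap ω K) (s : ℝ) : BddAbove ((fun p => dotp p (uvec s)) '' K) :=
  (hK.1.2.1.image (continuous_dotp _)).bddAbove

lemma dotp_le_suppFn (hK : IsCap ω K) {p : Pt} (hp : p ∈ K) (s : ℝ) :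
    dotp p (uvec s) ≤ suppFn K s :=
  le_csSup (bddAboveImg hK s) ⟨p, hp, rfl⟩

lemma suppFn_le (hK : IsCap ω K) {c : ℝ} (s : ℝ) (h : ∀ p ∈ K, dotp p (uvec s) ≤ c) :
    suppFn K s ≤ c :=
  csSup_le (hK.1.1.image _) (by rintro x ⟨p, hp, rfl⟩; exact h p hp)

lemma suppFn_combo (hK : IsCap ω K) {a m b : ℝ} (h1 : 0 ≤ Real.sin (b - m))
    (h2 : 0 ≤ Real.sin (m - a)) (h3 : 0 < Real.sin (b - a)) :
    suppFn K m * Real.sin (b - a)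
      ≤ suppFn K a * Real.sin (b - m) + suppFn K b * Real.sin (m - a) := by
  have key : suppFn K m
      ≤ (suppFn K a * Real.sin (b - m) + suppFn K b * Real.sin (m - a)) / Real.sin (b - a) := by
    refine suppFn_le hK m (fun p hp => ?_)
    rw [le_div_iff₀ h3, decomp p a m b]
    have ha := dotp_le_suppFn hK hp a
    have hb := dotp_le_suppFn hK hp b
    nlinarith
  exact (le_div_iff₀ h3).1 key

lemma edge_nonempty (hK : IsCap ω K) (s : ℝ) : (edge K s).Nonempty := by
  obtain ⟨q, hqK, hq⟩ := hK.1.2.1.exists_isMaxOn hK.1.1 (continuous_dotp (uvec s)).continuousOn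
  refine ⟨q, hqK, le_antisymm (dotp_le_suppFn hK hqK s) (suppFn_le hK s (fun p hp => hq hp))⟩

lemma edge_subset (s : ℝ) : edge K s ⊆ K := fun _ h => h.1

lemma edge_dotp {s : ℝ} {q : Pt} (hq : q ∈ edge K s) : dotp q (uvec s) = suppFn K s := hq.2

lemma K_sub_fan (hK : IsCap ω K) : K ⊆ fan ω := by
  intro p hp
  have h1 := dotp_le_suppFn hK hp (ω + π)
  have h2 := dotp_le_suppFn hK hp (3*π/2)
  rw [hK.2.2.2.1, dotp_pi_shift] at h1
  rw [hK.2.2.2.2.1, three_pi_half, dotp_pi_shift] at h2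
  exact ⟨by linarith, by linarith⟩

lemma mem_K_of (hK : IsCap ω K) {p : Pt}
    (h : ∀ s ∈ Jset ω ∪ {ω + π, 3*π/2}, dotp p (uvec s) ≤ suppFn K s) : p ∈ K := by
  rw [hK.2.2.2.2.2]
  exact Set.mem_iInter₂.2 h

lemma notMem_K_elim (hK : IsCap ω K) {p : Pt} (h : p ∉ K) :
    ∃ s ∈ Jset ω ∪ {ω + π, 3*π/2}, suppFn K s < dotp p (uvec s) := by
  by_contra hc
  push_neg at hc
  exact h (mem_K_of hK hc)

lemma suppFn_lipschitz (hK : IsCap ω K) :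
    ∃ R : ℝ, 0 ≤ R ∧ ∀ a b : ℝ, |suppFn K a - suppFn K b| ≤ R * |a - b| := by
  obtain ⟨R, hR⟩ := (hK.1.2.1.image
    ((continuous_eval 0).abs.add (continuous_eval 1).abs)).bddAbove
  have hRb : ∀ p ∈ K, |p 0| + |p 1| ≤ R := fun p hp => hR ⟨p, hp, rfl⟩
  obtain ⟨p0, hp0⟩ := hK.1.1
  have hR0 : 0 ≤ R := le_trans (by positivity) (hRb p0 hp0)
  refine ⟨R, hR0, fun a b => ?_⟩
  have key : ∀ p ∈ K, ∀ x y : ℝ, dotp p (uvec x) - dotp p (uvec y) ≤ R * |x - y| := by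
    intro p hp x y
    have babs : |Real.sin ((x-y)/2)| ≤ |x - y| / 2 := by
      have h := Real.abs_sin_le_abs (x := (x-y)/2)
      rwa [abs_div, abs_two] at h
    have hcos : |Real.cos x - Real.cos y| ≤ |x - y| := by
      have e : |Real.cos x - Real.cos y|
          = 2 * |Real.sin ((x+y)/2)| * |Real.sin ((x-y)/2)| := by
        rw [Real.cos_sub_cos, abs_mul, abs_mul]
        norm_num
      have b1 : |Real.sin ((x+y)/2)| ≤ 1 := Real.abs_sin_le_one _
      nlinarith [abs_nonneg (Real.sin ((x-y)/2)), abs_nonneg (Real.sin ((x+y)/2)), abs_nonneg (x-y)]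
    have hsin : |Real.sin x - Real.sin y| ≤ |x - y| := by
      have e : |Real.sin x - Real.sin y|
          = 2 * |Real.sin ((x-y)/2)| * |Real.cos ((x+y)/2)| := by
        rw [Real.sin_sub_sin, abs_mul, abs_mul]
        norm_num
      have b1 : |Real.cos ((x+y)/2)| ≤ 1 := Real.abs_cos_le_one _
      nlinarith [abs_nonneg (Real.sin ((x-y)/2)), abs_nonneg (Real.cos ((x+y)/2)), abs_nonneg (x-y)]
    have hP := hRb p hp
    have e1 : dotp p (uvec x) - dotp p (uvec y)
        = p 0 * (Real.cos x - Real.cos y) + p 1 * (Real.sin x - Real.sin y) := by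
      simp only [dotp, uvec, mk2_app0, mk2_app1]; ring
    rw [e1]
    have b1 : p 0 * (Real.cos x - Real.cos y) ≤ |p 0| * |x - y| := by
      calc p 0 * (Real.cos x - Real.cos y) ≤ |p 0 * (Real.cos x - Real.cos y)| := le_abs_self _
        _ = |p 0| * |Real.cos x - Real.cos y| := abs_mul _ _
        _ ≤ |p 0| * |x - y| := mul_le_mul_of_nonneg_left hcos (abs_nonneg _)
    have b2 : p 1 * (Real.sin x - Real.sin y) ≤ |p 1| * |x - y| := by
      calc p 1 * (Real.sin x - Real.sin y) ≤ |p 1 * (Real.sin x - Real.sin y)| := le_abs_self _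
        _ = |p 1| * |Real.sin x - Real.sin y| := abs_mul _ _
        _ ≤ |p 1| * |x - y| := mul_le_mul_of_nonneg_left hsin (abs_nonneg _)
    nlinarith [abs_nonneg (x - y)]
  have h1 : suppFn K a ≤ suppFn K b + R * |a - b| := by
    refine suppFn_le hK a (fun p hp => ?_)
    have := key p hp a b
    have := dotp_le_suppFn hK hp b
    linarith
  have h2 : suppFn K b ≤ suppFn K a + R * |b - a| := by
    refine suppFn_le hK b (fun p hp => ?_)
    have := key p hp b a
    have := dotp_le_suppFn hK hp a
    linarith
  rw [abs_sub_le_iff]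
  constructor
  · linarith
  · rw [abs_sub_comm] at h2; linarith

lemma suppFn_cont (hK : IsCap ω K) : Continuous (suppFn K) := by
  obtain ⟨R, hR0, hR⟩ := suppFn_lipschitz hK
  have : LipschitzWith (Real.toNNReal R) (suppFn K) := by
    refine LipschitzWith.of_dist_le_mul (fun a b => ?_)
    rw [Real.dist_eq, Real.dist_eq, Real.coe_toNNReal R hR0]
    exact hR a b
  exact this.continuous

end CapAux
namespace CapAux

variable {ω : ℝ} {K : Set Pt}

lemma sin_mono {u v : ℝ} (h0 : 0 ≤ u) (huv : u ≤ v) (hv : v ≤ π/2) :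
    Real.sin u ≤ Real.sin v := by
  have hpi : (0:ℝ) < π/2 := by positivity
  refine Real.strictMonoOn_sin.monotoneOn ⟨by linarith, by linarith⟩ ⟨by linarith, hv⟩ huv

lemma dotp_sub_smul (x u q : Pt) (c : ℝ) :
    dotp (x - c • u) q = dotp x q - c * dotp u q := by
  simp only [dotp, PiLp.sub_apply, PiLp.smul_apply, smul_eq_mul]
  ring

lemma dotp_add_smul (x u q : Pt) (c : ℝ) :
    dotp (x + c • u) q = dotp x q + c * dotp u q := by
  simp only [dotp, PiLp.add_apply, PiLp.smul_apply, smul_eq_mul]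
  ring

lemma dotp_uvec_self (t : ℝ) : dotp (uvec t) (uvec t) = 1 := by
  simp only [dotp, uvec, mk2_app0, mk2_app1]
  rw [← Real.sin_sq_add_cos_sq t]
  ring

-- low side: 0 ≤ s < t < ω
lemma low_bound (hK : IsCap ω K) (hω : ω ∈ Ioc 0 (π/2)) {t s : ℝ}
    (ht0 : 0 < t) (htω : t < ω) (hs0 : 0 ≤ s) (hst : s < t) :
    Real.sin (ω - s) * (suppFn K t - 1) ≤ Real.sin (ω - t) * suppFn K s := by
  have hωs : 0 < Real.sin (ω - s) := by
    apply Real.sin_pos_of_pos_of_lt_pi <;> [linarith; linarith [Real.pi_gt_three, hω.2]]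
  have hts : 0 ≤ Real.sin (t - s) := by
    apply Real.sin_nonneg_of_nonneg_of_le_pi <;> [linarith; linarith [Real.pi_gt_three, hω.2]]
  have hωt : 0 ≤ Real.sin (ω - t) := by
    apply Real.sin_nonneg_of_nonneg_of_le_pi <;> [linarith; linarith [Real.pi_gt_three, hω.2]]
  have hcombo := suppFn_combo hK (a := s) (m := t) (b := ω) hωt hts hωs
  rw [hK.2.1] at hcombo
  have hmono : Real.sin (t - s) ≤ Real.sin (ω - s) := sin_mono (by linarith) (by linarith) (by linarith [hω.2])
  linarith

lemma low_pt (hω : ω ∈ Ioc 0 (π/2)) {t s : ℝ}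
    (ht0 : 0 < t) (htω : t < ω) (hs0 : 0 ≤ s) (hst : s < t) {p : Pt}
    (hfan : 0 ≤ dotp p (uvec ω)) :
    Real.sin (ω - t) * dotp p (uvec s) ≤ Real.sin (ω - s) * dotp p (uvec t) := by
  have hd := decomp p s t ω
  have hts : 0 ≤ Real.sin (t - s) := by
    apply Real.sin_nonneg_of_nonneg_of_le_pi <;> [linarith; linarith [Real.pi_gt_three, hω.2]]
  nlinarith [mul_nonneg hfan hts]

lemma low_lt (hK : IsCap ω K) (hω : ω ∈ Ioc 0 (π/2)) {t s : ℝ}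
    (ht0 : 0 < t) (htω : t < ω) (hs0 : 0 ≤ s) (hst : s < t) {p : Pt}
    (hfan : 0 ≤ dotp p (uvec ω)) (hq : dotp p (uvec t) < suppFn K t - 1) :
    dotp p (uvec s) < suppFn K s := by
  have hωt : 0 < Real.sin (ω - t) := by
    apply Real.sin_pos_of_pos_of_lt_pi <;> [linarith; linarith [Real.pi_gt_three, hω.2]]
  have hωs : 0 < Real.sin (ω - s) := by
    apply Real.sin_pos_of_pos_of_lt_pi <;> [linarith; linarith [Real.pi_gt_three, hω.2]]
  have h1 := low_pt hω ht0 htω hs0 hst hfan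
  have h2 := low_bound hK hω ht0 htω hs0 hst
  have h3 : Real.sin (ω - s) * dotp p (uvec t) < Real.sin (ω - s) * (suppFn K t - 1) :=
    mul_lt_mul_of_pos_left hq hωs
  have : Real.sin (ω - t) * dotp p (uvec s) < Real.sin (ω - t) * suppFn K s := by linarith
  exact lt_of_mul_lt_mul_left this (le_of_lt hωt)

lemma low_le (hK : IsCap ω K) (hω : ω ∈ Ioc 0 (π/2)) {t s : ℝ}
    (ht0 : 0 < t) (htω : t < ω) (hs0 : 0 ≤ s) (hst : s < t) {p : Pt}
    (hfan : 0 ≤ dotp p (uvec ω)) (hq : dotp p (uvec t) ≤ suppFn K t - 1) :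
    dotp p (uvec s) ≤ suppFn K s := by
  have hωt : 0 < Real.sin (ω - t) := by
    apply Real.sin_pos_of_pos_of_lt_pi <;> [linarith; linarith [Real.pi_gt_three, hω.2]]
  have hωs : 0 < Real.sin (ω - s) := by
    apply Real.sin_pos_of_pos_of_lt_pi <;> [linarith; linarith [Real.pi_gt_three, hω.2]]
  have h1 := low_pt hω ht0 htω hs0 hst hfan
  have h2 := low_bound hK hω ht0 htω hs0 hst
  have h3 : Real.sin (ω - s) * dotp p (uvec t) ≤ Real.sin (ω - s) * (suppFn K t - 1) :=
    mul_le_mul_of_nonneg_left hq (le_of_lt hωs)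
  have : Real.sin (ω - t) * dotp p (uvec s) ≤ Real.sin (ω - t) * suppFn K s := by linarith
  exact le_of_mul_le_mul_left this hωt

-- high side: t + π/2 < s ≤ ω + π/2
lemma high_bound (hK : IsCap ω K) (hω : ω ∈ Ioc 0 (π/2)) {t s : ℝ}
    (ht0 : 0 < t) (htω : t < ω) (hs1 : t + π/2 < s) (hs2 : s ≤ ω + π/2) :
    Real.sin (s - π/2) * (suppFn K (t + π/2) - 1) ≤ Real.sin t * suppFn K s := by
  have hpi : (0:ℝ) < π/2 := by positivity
  have hsp : 0 < Real.sin (s - π/2) := by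
    apply Real.sin_pos_of_pos_of_lt_pi <;> [linarith; linarith [Real.pi_gt_three, hω.2]]
  have hstp : 0 ≤ Real.sin (s - (t + π/2)) := by
    apply Real.sin_nonneg_of_nonneg_of_le_pi <;> [linarith; linarith [Real.pi_gt_three, hω.2]]
  have hst : 0 < Real.sin t := by
    apply Real.sin_pos_of_pos_of_lt_pi <;> [linarith; linarith [Real.pi_gt_three, hω.2]]
  have hcombo := suppFn_combo hK (a := π/2) (m := t + π/2) (b := s) hstp (by
      rw [show t + π/2 - π/2 = t by ring]; exact le_of_lt hst) (by
      rw [show s - π/2 = s - π/2 by ring]; exact hsp)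
  rw [hK.2.2.1, show t + π/2 - π/2 = t by ring] at hcombo
  have hmono : Real.sin (s - (t + π/2)) ≤ Real.sin (s - π/2) :=
    sin_mono (by linarith) (by linarith) (by linarith [hω.2])
  linarith

lemma high_pt (hω : ω ∈ Ioc 0 (π/2)) {t s : ℝ}
    (ht0 : 0 < t) (htω : t < ω) (hs1 : t + π/2 < s) (hs2 : s ≤ ω + π/2) {p : Pt}
    (hfan : 0 ≤ dotp p (uvec (π/2))) :
    Real.sin t * dotp p (uvec s) ≤ Real.sin (s - π/2) * dotp p (uvec (t + π/2)) := by
  have hd := decomp p (π/2) (t + π/2) s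
  rw [show t + π/2 - π/2 = t by ring] at hd
  have hstp : 0 ≤ Real.sin (s - (t + π/2)) := by
    apply Real.sin_nonneg_of_nonneg_of_le_pi <;> [linarith; linarith [Real.pi_gt_three, hω.2]]
  nlinarith [mul_nonneg hfan hstp]

lemma high_lt (hK : IsCap ω K) (hω : ω ∈ Ioc 0 (π/2)) {t s : ℝ}
    (ht0 : 0 < t) (htω : t < ω) (hs1 : t + π/2 < s) (hs2 : s ≤ ω + π/2) {p : Pt}
    (hfan : 0 ≤ dotp p (uvec (π/2)))
    (hq : dotp p (uvec (t + π/2)) < suppFn K (t + π/2) - 1) :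
    dotp p (uvec s) < suppFn K s := by
  have hsp : 0 < Real.sin (s - π/2) := by
    apply Real.sin_pos_of_pos_of_lt_pi <;> [linarith; linarith [Real.pi_gt_three, hω.2]]
  have hst : 0 < Real.sin t := by
    apply Real.sin_pos_of_pos_of_lt_pi <;> [linarith; linarith [Real.pi_gt_three, hω.2]]
  have h1 := high_pt hω ht0 htω hs1 hs2 hfan
  have h2 := high_bound hK hω ht0 htω hs1 hs2
  have h3 : Real.sin (s - π/2) * dotp p (uvec (t + π/2))
      < Real.sin (s - π/2) * (suppFn K (t + π/2) - 1) := mul_lt_mul_of_pos_left hq hsp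
  have : Real.sin t * dotp p (uvec s) < Real.sin t * suppFn K s := by linarith
  exact lt_of_mul_lt_mul_left this (le_of_lt hst)

lemma high_le (hK : IsCap ω K) (hω : ω ∈ Ioc 0 (π/2)) {t s : ℝ}
    (ht0 : 0 < t) (htω : t < ω) (hs1 : t + π/2 < s) (hs2 : s ≤ ω + π/2) {p : Pt}
    (hfan : 0 ≤ dotp p (uvec (π/2)))
    (hq : dotp p (uvec (t + π/2)) ≤ suppFn K (t + π/2) - 1) :
    dotp p (uvec s) ≤ suppFn K s := by
  have hsp : 0 < Real.sin (s - π/2) := by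
    apply Real.sin_pos_of_pos_of_lt_pi <;> [linarith; linarith [Real.pi_gt_three, hω.2]]
  have hst : 0 < Real.sin t := by
    apply Real.sin_pos_of_pos_of_lt_pi <;> [linarith; linarith [Real.pi_gt_three, hω.2]]
  have h1 := high_pt hω ht0 htω hs1 hs2 hfan
  have h2 := high_bound hK hω ht0 htω hs1 hs2
  have h3 : Real.sin (s - π/2) * dotp p (uvec (t + π/2))
      ≤ Real.sin (s - π/2) * (suppFn K (t + π/2) - 1) :=
    mul_le_mul_of_nonneg_left hq (le_of_lt hsp)
  have : Real.sin t * dotp p (uvec s) ≤ Real.sin t * suppFn K s := by linarith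
  exact le_of_mul_le_mul_left this hst

-- middle: t ≤ s ≤ t + π/2, corner in K
lemma mid_lt (hK : IsCap ω K) {t s : ℝ} (hts : t ≤ s) (hstp : s ≤ t + π/2)
    (hx : innerCorner K t ∈ K) {p : Pt}
    (h1 : dotp p (uvec t) < suppFn K t - 1)
    (h2 : dotp p (uvec (t + π/2)) < suppFn K (t + π/2) - 1) :
    dotp p (uvec s) < suppFn K s := by
  have hcor := corner_dot K t s
  have hexp := expand_mid p t s
  have hKx := dotp_le_suppFn hK hx s
  rw [hcor] at hKx
  have hcos : 0 ≤ Real.cos (s - t) := by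
    apply Real.cos_nonneg_of_mem_Icc
    constructor <;> [linarith [Real.pi_gt_three]; linarith]
  have hsin : 0 ≤ Real.sin (s - t) := by
    apply Real.sin_nonneg_of_nonneg_of_le_pi <;> [linarith; linarith [Real.pi_gt_three]]
  have hc1 : Real.cos (s - t) ≤ 1 := Real.cos_le_one _
  have hs1 : Real.sin (s - t) ≤ 1 := Real.sin_le_one _
  have hsum : 1 ≤ Real.cos (s - t) + Real.sin (s - t) := by
    nlinarith [Real.sin_sq_add_cos_sq (s - t)]
  set X := suppFn K t - 1 with hX
  set Y := suppFn K (t + π/2) - 1 with hY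
  set A := dotp p (uvec t) with hA
  set B := dotp p (uvec (t + π/2)) with hB
  set δ := min (X - A) (Y - B) with hδdef
  have hδ : 0 < δ := lt_min (by linarith) (by linarith)
  have e1 : Real.cos (s - t) * δ ≤ Real.cos (s - t) * (X - A) :=
    mul_le_mul_of_nonneg_left (min_le_left _ _) hcos
  have e2 : Real.sin (s - t) * δ ≤ Real.sin (s - t) * (Y - B) :=
    mul_le_mul_of_nonneg_left (min_le_right _ _) hsin
  have e3 : δ * 1 ≤ δ * (Real.cos (s - t) + Real.sin (s - t)) :=
    mul_le_mul_of_nonneg_left hsum (le_of_lt hδ)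
  nlinarith

-- corner strictly inside the fan, given a wedge point
lemma corner_fan_pos (hK : IsCap ω K) (hω : ω ∈ Ioc 0 (π/2)) {t : ℝ}
    (ht : t ∈ Ioo 0 ω) {p : Pt} (hp : p ∈ fan ω)
    (h1 : dotp p (uvec t) < suppFn K t - 1)
    (h2 : dotp p (uvec (t + π/2)) < suppFn K (t + π/2) - 1) :
    0 < dotp (innerCorner K t) (uvec ω) ∧ 0 < dotp (innerCorner K t) (uvec (π/2)) := by
  obtain ⟨ht0, htω⟩ := ht
  obtain ⟨hpω, hpπ⟩ := hp
  have hωle := hω.2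
  have hπ := Real.pi_gt_three
  have hcω := corner_dot K t ω
  have heω := expand_mid p t ω
  have hcπ := corner_dot K t (π/2)
  have heπ := expand_mid p t (π/2)
  have hc1 : 0 < Real.cos (ω - t) := by
    apply Real.cos_pos_of_mem_Ioo
    constructor
    · linarith
    · linarith
  have hs1 : 0 < Real.sin (ω - t) := by
    apply Real.sin_pos_of_pos_of_lt_pi
    · linarith
    · linarith
  have hc2 : 0 < Real.cos (π/2 - t) := by
    apply Real.cos_pos_of_mem_Ioo
    constructor
    · linarith
    · linarith
  have hs2 : 0 < Real.sin (π/2 - t) := by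
    apply Real.sin_pos_of_pos_of_lt_pi
    · linarith
    · linarith
  constructor
  · nlinarith
  · nlinarith

lemma subset_int_fan :
    {q : Pt | 0 < dotp q (uvec ω) ∧ 0 < dotp q (uvec (π/2))} ⊆ interior (fan ω) := by
  apply interior_maximal
  · intro q hq
    exact ⟨le_of_lt hq.1, le_of_lt hq.2⟩
  · have h1 : IsOpen {q : Pt | 0 < dotp q (uvec ω)} :=
      isOpen_Ioi.preimage (continuous_dotp (uvec ω))
    have h2 : IsOpen {q : Pt | 0 < dotp q (uvec (π/2))} :=
      isOpen_Ioi.preimage (continuous_dotp (uvec (π/2)))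
    exact h1.inter h2

lemma int_pos_aux {S : Set Pt} {x u : Pt} (hS : ∀ q ∈ S, 0 ≤ dotp q u)
    (huu : dotp u u = 1) (hx : x ∈ interior S) : 0 < dotp x u := by
  rcases lt_or_eq_of_le (hS x (interior_subset hx)) with h | h
  · exact h
  · exfalso
    have htend : Tendsto (fun n : ℕ => x - (1/(n+1:ℝ)) • u) atTop (𝓝 x) := by
      have h0 : Tendsto (fun n : ℕ => (1/(n+1:ℝ))) atTop (𝓝 0) :=
        tendsto_one_div_add_atTop_nhds_zero_nat
      have := (h0.smul_const u).const_sub x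
      simpa using ((h0.smul_const u).neg.const_add x).congr (fun n => by
        simp [sub_eq_add_neg])
    have hev := htend.eventually (isOpen_interior.mem_nhds hx)
    obtain ⟨n, hn⟩ := hev.exists
    have hmem : 0 ≤ dotp (x - (1/(n+1:ℝ)) • u) u := hS _ (interior_subset hn)
    rw [dotp_sub_smul, ← h, huu] at hmem
    have : (0:ℝ) < 1/(n+1:ℝ) := by positivity
    linarith

lemma int_fan_pos {x : Pt} (hx : x ∈ interior (fan ω)) :
    0 < dotp x (uvec ω) ∧ 0 < dotp x (uvec (π/2)) :=
  ⟨int_pos_aux (fun _ hq => hq.1) (dotp_uvec_self ω) hx,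
   int_pos_aux (fun _ hq => hq.2) (dotp_uvec_self (π/2)) hx⟩

-- bounds for points on the extreme edges
lemma e0_bound (hK : IsCap ω K) (hω : ω ∈ Ioc 0 (π/2)) {t : ℝ}
    (ht : t ∈ Ioo 0 ω) {q : Pt} (hq : q ∈ edge K 0) :
    suppFn K t - 1 ≤ dotp q (uvec t) := by
  have hfan := (K_sub_fan hK hq.1).1
  have hd := decomp q 0 t ω
  rw [show ω - (0:ℝ) = ω by ring, show t - (0:ℝ) = t by ring] at hd
  have hq0 : dotp q (uvec 0) = suppFn K 0 := hq.2
  have hsω : 0 < Real.sin ω := by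
    apply Real.sin_pos_of_pos_of_lt_pi <;> [exact hω.1; linarith [Real.pi_gt_three, hω.2]]
  have hst : 0 < Real.sin t := by
    apply Real.sin_pos_of_pos_of_lt_pi <;>
      [exact ht.1; linarith [Real.pi_gt_three, ht.2, hω.2]]
  have hωt : 0 ≤ Real.sin (ω - t) := by
    apply Real.sin_nonneg_of_nonneg_of_le_pi <;>
      [linarith [ht.2]; linarith [Real.pi_gt_three, hω.2, ht.1]]
  have hcombo := suppFn_combo hK (a := 0) (m := t) (b := ω) hωt (by
      rw [show t - (0:ℝ) = t by ring]; exact le_of_lt hst) (by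
      rw [show ω - (0:ℝ) = ω by ring]; exact hsω)
  rw [hK.2.1, show t - (0:ℝ) = t by ring, show ω - (0:ℝ) = ω by ring] at hcombo
  have hmono : Real.sin t ≤ Real.sin ω :=
    sin_mono (le_of_lt ht.1) (le_of_lt ht.2) hω.2
  have key : Real.sin ω * (suppFn K t - 1) ≤ Real.sin ω * dotp q (uvec t) := by
    nlinarith [mul_nonneg hfan (le_of_lt hst)]
  exact le_of_mul_le_mul_left key hsω

lemma etop_bound (hK : IsCap ω K) (hω : ω ∈ Ioc 0 (π/2)) {t : ℝ}
    (ht : t ∈ Ioo 0 ω) {q : Pt} (hq : q ∈ edge K (ω + π/2)) :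
    suppFn K (t + π/2) - 1 ≤ dotp q (uvec (t + π/2)) := by
  have hfan := (K_sub_fan hK hq.1).2
  have hd := decomp q (π/2) (t + π/2) (ω + π/2)
  rw [show ω + π/2 - (t + π/2) = ω - t by ring, show ω + π/2 - π/2 = ω by ring,
    show t + π/2 - π/2 = t by ring] at hd
  have hqtop : dotp q (uvec (ω + π/2)) = suppFn K (ω + π/2) := hq.2
  have hsω : 0 < Real.sin ω := by
    apply Real.sin_pos_of_pos_of_lt_pi <;> [exact hω.1; linarith [Real.pi_gt_three, hω.2]]
  have hst : 0 < Real.sin t := by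
    apply Real.sin_pos_of_pos_of_lt_pi <;>
      [exact ht.1; linarith [Real.pi_gt_three, ht.2, hω.2]]
  have hωt : 0 ≤ Real.sin (ω - t) := by
    apply Real.sin_nonneg_of_nonneg_of_le_pi <;>
      [linarith [ht.2]; linarith [Real.pi_gt_three, hω.2, ht.1]]
  have hcombo := suppFn_combo hK (a := π/2) (m := t + π/2) (b := ω + π/2) (by
      rw [show ω + π/2 - (t + π/2) = ω - t by ring]; exact hωt) (by
      rw [show t + π/2 - π/2 = t by ring]; exact le_of_lt hst) (by
      rw [show ω + π/2 - π/2 = ω by ring]; exact hsω)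
  rw [hK.2.2.1, show ω + π/2 - (t + π/2) = ω - t by ring, show t + π/2 - π/2 = t by ring,
    show ω + π/2 - π/2 = ω by ring] at hcombo
  have hmono : Real.sin (ω - t) ≤ Real.sin ω :=
    sin_mono (by linarith [ht.2]) (by linarith [ht.1]) hω.2
  have key : Real.sin ω * (suppFn K (t + π/2) - 1) ≤ Real.sin ω * dotp q (uvec (t + π/2)) := by
    nlinarith [mul_nonneg hfan hωt]
  exact le_of_mul_le_mul_left key hsω

end CapAux
namespace CapAux

variable {ω : ℝ} {K : Set Pt}

lemma dotp_uvec_uvec (a b : ℝ) : dotp (uvec a) (uvec b) = Real.cos (a - b) := by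
  simp only [dotp, uvec, mk2_app0, mk2_app1]
  rw [Real.cos_sub]

lemma niche_elim {p : Pt} (hp : p ∈ niche ω K) :
    p ∈ fan ω ∧ ∃ t, t ∈ Ioo 0 ω ∧ dotp p (uvec t) < suppFn K t - 1 ∧
      dotp p (uvec (t + π/2)) < suppFn K (t + π/2) - 1 := by
  obtain ⟨hfan, hU⟩ := hp
  simp only [mem_iUnion, exists_prop] at hU
  obtain ⟨t, ht, hQ⟩ := hU
  exact ⟨hfan, t, ht, hQ.1, hQ.2⟩

lemma niche_pointwise (hK : IsCap ω K) (hω : ω ∈ Ioc 0 (π/2))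
    (st3 : ∀ t ∈ Ioo 0 ω, innerCorner K t ∉ interior (fan ω) ∨ innerCorner K t ∈ K)
    {p : Pt} (hp : p ∈ niche ω K) :
    ∀ s, 0 ≤ s → s ≤ ω + π/2 → dotp p (uvec s) < suppFn K s := by
  obtain ⟨hfan, t, ht, h1, h2⟩ := niche_elim hp
  have hxK : innerCorner K t ∈ K := by
    rcases st3 t ht with hni | hK'
    · exact absurd (subset_int_fan (corner_fan_pos hK hω ht hfan h1 h2)) hni
    · exact hK'
  intro s hs0 hs1
  rcases lt_or_ge s t with hst | hts
  · exact low_lt hK hω ht.1 ht.2 hs0 hst hfan.1 h1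
  · rcases le_or_gt s (t + π/2) with hstp | hstp
    · exact mid_lt hK hts hstp hxK h1 h2
    · exact high_lt hK hω ht.1 ht.2 hstp hs1 hfan.2 h2

lemma fan_dot_all (hK : IsCap ω K) {p : Pt} (hfan : p ∈ fan ω) :
    ∀ s ∈ ({ω + π, 3*π/2} : Set ℝ), dotp p (uvec s) ≤ suppFn K s := by
  intro s hs
  rcases hs with h | h
  · rw [h, dotp_pi_shift, hK.2.2.2.1]
    linarith [hfan.1]
  · rw [mem_singleton_iff] at h
    rw [h, hK.2.2.2.2.1, three_pi_half, dotp_pi_shift]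
    linarith [hfan.2]

lemma st3_to_st2 (hK : IsCap ω K) (hω : ω ∈ Ioc 0 (π/2))
    (st3 : ∀ t ∈ Ioo 0 ω, innerCorner K t ∉ interior (fan ω) ∨ innerCorner K t ∈ K) :
    niche ω K ⊆ K \ upperBoundary ω K := by
  intro p hp
  have hfan := (niche_elim hp).1
  have hpt := niche_pointwise hK hω st3 hp
  have hπ : (0:ℝ) ≤ π/2 := by positivity
  constructor
  · apply mem_K_of hK
    intro s hs
    rcases hs with hJ | hrest
    · rcases hJ with ⟨h0s, hsω⟩ | ⟨hπs, hsωπ⟩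
      · exact le_of_lt (hpt s h0s (by linarith))
      · exact le_of_lt (hpt s (by linarith) hsωπ)
    · exact fan_dot_all hK hfan s hrest
  · intro hub
    simp only [upperBoundary, mem_iUnion, exists_prop] at hub
    obtain ⟨s, hs, hedge⟩ := hub
    exact absurd hedge.2 (ne_of_lt (hpt s hs.1 hs.2))

lemma st1_to_st3 (hK : IsCap ω K) (hω : ω ∈ Ioc 0 (π/2)) (h1 : niche ω K ⊆ K) :
    ∀ t ∈ Ioo 0 ω, innerCorner K t ∉ interior (fan ω) ∨ innerCorner K t ∈ K := by
  intro t ht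
  by_cases hint : innerCorner K t ∈ interior (fan ω)
  swap
  · exact Or.inl hint
  right
  obtain ⟨hxω, hxπ⟩ := int_fan_pos hint
  set x := innerCorner K t with hxdef
  have hX : dotp x (uvec t) = suppFn K t - 1 := by
    rw [hxdef, corner_dot]
    simp
  have hY : dotp x (uvec (t + π/2)) = suppFn K (t + π/2) - 1 := by
    rw [hxdef, corner_dot]
    rw [show t + π/2 - t = π/2 by ring]
    simp
  set c := min (dotp x (uvec ω)) (dotp x (uvec (π/2))) with hcdef
  have hc : 0 < c := lt_min hxω hxπ
  have key : ∀ s : ℝ, dotp x (uvec s) ≤ suppFn K s := by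
    intro s
    apply le_of_forall_pos_le_add
    intro ε hε
    set d := min (ε/2) (c/4) with hddef
    have hd0 : 0 < d := lt_min (by linarith) (by linarith)
    set y := x - d • uvec t - d • uvec (t + π/2) with hydef
    have hyd : ∀ r : ℝ, dotp y (uvec r)
        = dotp x (uvec r) - d * Real.cos (t - r) - d * Real.cos (t + π/2 - r) := by
      intro r
      rw [hydef, dotp_sub_smul, dotp_sub_smul, dotp_uvec_uvec, dotp_uvec_uvec]
    have hybound : ∀ r : ℝ, dotp x (uvec r) - 2*d ≤ dotp y (uvec r) ∧
        dotp y (uvec r) ≤ dotp x (uvec r) + 2*d := by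
      intro r
      rw [hyd r]
      have c1 := Real.neg_one_le_cos (t - r)
      have c2 := Real.cos_le_one (t - r)
      have c3 := Real.neg_one_le_cos (t + π/2 - r)
      have c4 := Real.cos_le_one (t + π/2 - r)
      constructor <;> nlinarith
    have hyniche : y ∈ niche ω K := by
      refine ⟨⟨?_, ?_⟩, ?_⟩
      · have := (hybound ω).1
        have hcm : c ≤ dotp x (uvec ω) := min_le_left _ _
        have hd4 : d ≤ c/4 := min_le_right _ _
        linarith
      · have := (hybound (π/2)).1
        have hcm : c ≤ dotp x (uvec (π/2)) := min_le_right _ _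
        have hd4 : d ≤ c/4 := min_le_right _ _
        linarith
      · simp only [mem_iUnion, exists_prop]
        refine ⟨t, ht, ?_, ?_⟩
        · rw [hyd t, show t - t = 0 by ring, show t + π/2 - t = π/2 by ring,
            Real.cos_zero, Real.cos_pi_div_two, hX]
          linarith
        · rw [hyd (t + π/2)]
          rw [show t - (t + π/2) = -(π/2) by ring, show t + π/2 - (t + π/2) = 0 by ring]
          rw [Real.cos_neg, Real.cos_pi_div_two, Real.cos_zero, hY]
          linarith
    have hyK : y ∈ K := h1 hyniche
    have hys := dotp_le_suppFn hK hyK s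
    have := (hybound s).1
    have hd2 : 2*d ≤ ε := by
      have : d ≤ ε/2 := min_le_left _ _
      linarith
    linarith
  exact mem_K_of hK (fun s _ => key s)

end CapAux
namespace CapAux

variable {ω : ℝ} {K : Set Pt}

lemma continuous_angle (p : Pt) : Continuous fun r => dotp p (uvec r) := by
  have h : (fun r => dotp p (uvec r)) = fun r => p 0 * Real.cos r + p 1 * Real.sin r := rfl
  rw [h]
  exact (continuous_const.mul Real.continuous_cos).add (continuous_const.mul Real.continuous_sin)

lemma tendsto_dotp_pair {pn : ℕ → Pt} {sn : ℕ → ℝ} {p : Pt} {s : ℝ}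
    (hp : Tendsto pn atTop (𝓝 p)) (hs : Tendsto sn atTop (𝓝 s)) :
    Tendsto (fun n => dotp (pn n) (uvec (sn n))) atTop (𝓝 (dotp p (uvec s))) := by
  have h0 : Tendsto (fun n => pn n 0) atTop (𝓝 (p 0)) :=
    ((continuous_eval 0).tendsto p).comp hp
  have h1 : Tendsto (fun n => pn n 1) atTop (𝓝 (p 1)) :=
    ((continuous_eval 1).tendsto p).comp hp
  have hc : Tendsto (fun n => Real.cos (sn n)) atTop (𝓝 (Real.cos s)) :=
    (Real.continuous_cos.tendsto s).comp hs
  have hsn : Tendsto (fun n => Real.sin (sn n)) atTop (𝓝 (Real.sin s)) :=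
    (Real.continuous_sin.tendsto s).comp hs
  exact (h0.mul hc).add (h1.mul hsn)

lemma qminus_down (hω : ω ∈ Ioc 0 (π/2)) {t' : ℝ} (ht' : t' ∈ Ioo 0 ω) {p : Pt} {μ : ℝ}
    (hμ : 0 ≤ μ) (hq : p + μ • uvec (π/2) ∈ Qminus K t') : p ∈ Qminus K t' := by
  obtain ⟨h1, h2⟩ := hq
  rw [dotp_add_smul, dotp_uvec_uvec] at h1 h2
  have hc1 : 0 ≤ Real.cos (π/2 - t') := by
    rw [Real.cos_pi_div_two_sub]
    exact Real.sin_nonneg_of_nonneg_of_le_pi (le_of_lt ht'.1)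
      (by linarith [ht'.2, hω.2, Real.pi_gt_three])
  have hc2 : 0 ≤ Real.cos (π/2 - (t' + π/2)) := by
    rw [show π/2 - (t' + π/2) = -t' by ring, Real.cos_neg]
    apply Real.cos_nonneg_of_mem_Icc
    constructor
    · linarith [ht'.1, Real.pi_gt_three]
    · linarith [ht'.1, ht'.2, hω.2]
  exact ⟨by nlinarith, by nlinarith⟩

lemma uvec_pi_half_dot (r : ℝ) : dotp (uvec (π/2)) (uvec r) = Real.cos (π/2 - r) := by
  rw [dotp_uvec_uvec]

lemma exists_top (hK : IsCap ω K) (hω : ω ∈ Ioc 0 (π/2)) {p : Pt} (hp : p ∈ K) :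
    ∃ κ : ℝ, 0 ≤ κ ∧ p + κ • uvec (π/2) ∈ upperBoundary ω K ∧
      ∀ μ, 0 ≤ μ → μ ≤ κ → p + μ • uvec (π/2) ∈ K := by
  classical
  set u := uvec (π/2) with hu
  set L := {lam : ℝ | 0 ≤ lam ∧ p + lam • u ∈ K} with hL
  have hL0 : (0:ℝ) ∈ L := ⟨le_refl 0, by simpa using hp⟩
  have hLbdd : BddAbove L := by
    refine ⟨1 - dotp p u, fun lam hlam => ?_⟩
    have h1 := dotp_le_suppFn hK hlam.2 (π/2)
    rw [dotp_add_smul, dotp_uvec_self, hK.2.2.1] at h1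
    linarith
  have hLclosed : IsClosed L := by
    have h1 : Continuous fun lam : ℝ => p + lam • u :=
      continuous_const.add (continuous_id.smul continuous_const)
    exact isClosed_Ici.inter (hK.1.2.1.isClosed.preimage h1)
  have hLconv : Convex ℝ L := by
    intro l1 h1 l2 h2 a b ha hb hab
    constructor
    · have := h1.1; have := h2.1; positivity
    · have hid : p + (a * l1 + b * l2) • u = a • (p + l1 • u) + b • (p + l2 • u) := by
        have he : a • (p + l1 • u) + b • (p + l2 • u)
            = (a + b) • p + (a * l1 + b * l2) • u := by
          rw [smul_add, smul_add, smul_smul, smul_smul, add_smul, add_smul]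
          abel
        rw [he, hab, one_smul]
      rw [show (a • l1 + b • l2 : ℝ) = a * l1 + b * l2 by simp [smul_eq_mul], hid]
      exact hK.1.2.2 h1.2 h2.2 ha hb hab
  set κ := sSup L with hκ
  have hκL : κ ∈ L := hLclosed.csSup_mem ⟨0, hL0⟩ hLbdd
  have hκ0 : 0 ≤ κ := hκL.1
  have hmid : ∀ μ, 0 ≤ μ → μ ≤ κ → p + μ • u ∈ K := by
    intro μ h0 h1
    exact (hLconv.ordConnected.out hL0 hκL ⟨h0, h1⟩).2
  refine ⟨κ, hκ0, ?_, hmid⟩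
  -- top point is on the upper boundary
  have hnK : ∀ n : ℕ, ∃ s ∈ Jset ω,
      suppFn K s < dotp (p + (κ + 1/(n+1)) • u) (uvec s) := by
    intro n
    have hpos : (0:ℝ) < 1/(n+1) := by positivity
    have hnotL : (κ + 1/(n+1)) ∉ L := by
      intro hmem
      have := le_csSup hLbdd hmem
      linarith
    have hnotK : p + (κ + 1/(n+1)) • u ∉ K := by
      intro hmem
      exact hnotL ⟨by linarith, hmem⟩
    obtain ⟨s, hsS, hsv⟩ := notMem_K_elim hK hnotK
    rcases hsS with hsJ | hsrest
    · exact ⟨s, hsJ, hsv⟩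
    · exfalso
      have hfan := K_sub_fan hK hp
      have huω : dotp u (uvec ω) = Real.cos (π/2 - ω) := uvec_pi_half_dot ω
      have hsinω : 0 ≤ Real.cos (π/2 - ω) := by
        apply Real.cos_nonneg_of_mem_Icc
        constructor
        · linarith [hω.2, Real.pi_gt_three, hω.1]
        · linarith [hω.1]
      rcases hsrest with h | h
      · rw [h, dotp_pi_shift, hK.2.2.2.1, dotp_add_smul] at hsv
        rw [huω] at hsv
        nlinarith [hfan.1]
      · rw [mem_singleton_iff] at h
        rw [h, hK.2.2.2.2.1, three_pi_half, dotp_pi_shift, dotp_add_smul,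
          dotp_uvec_self] at hsv
        nlinarith [hfan.2]
  choose sn hsnJ hsnv using hnK
  have hJcpt : IsCompact (Jset ω) := isCompact_Icc.union isCompact_Icc
  obtain ⟨sstar, hsstarJ, φ, hφmono, hφtend⟩ := hJcpt.tendsto_subseq hsnJ
  have hlamtend : Tendsto (fun n : ℕ => κ + 1/(φ n + 1)) atTop (𝓝 κ) := by
    have h0 : Tendsto (fun n : ℕ => 1/((n:ℝ)+1)) atTop (𝓝 0) :=
      tendsto_one_div_add_atTop_nhds_zero_nat
    have h1 : Tendsto (fun n : ℕ => 1/((φ n : ℝ)+1)) atTop (𝓝 0) :=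
      h0.comp hφmono.tendsto_atTop
    simpa using h1.const_add κ
  have hptend : Tendsto (fun n : ℕ => p + (κ + 1/(φ n + 1)) • u) atTop (𝓝 (p + κ • u)) :=
    tendsto_const_nhds.add (hlamtend.smul_const u)
  have hLHS : Tendsto (fun n => dotp (p + (κ + 1/(φ n + 1)) • u) (uvec (sn (φ n))))
      atTop (𝓝 (dotp (p + κ • u) (uvec sstar))) :=
    tendsto_dotp_pair hptend hφtend
  have hRHS : Tendsto (fun n => suppFn K (sn (φ n))) atTop (𝓝 (suppFn K sstar)) :=
    ((suppFn_cont hK).tendsto sstar).comp hφtend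
  have hge : suppFn K sstar ≤ dotp (p + κ • u) (uvec sstar) :=
    le_of_tendsto_of_tendsto' hRHS hLHS (fun n => le_of_lt (hsnv (φ n)))
  have hκK : p + κ • u ∈ K := hκL.2
  have hedge : p + κ • u ∈ edge K sstar :=
    ⟨hκK, le_antisymm (dotp_le_suppFn hK hκK sstar) hge⟩
  simp only [upperBoundary, mem_iUnion, exists_prop]
  refine ⟨sstar, ?_, hedge⟩
  rcases hsstarJ with h | h
  · exact ⟨h.1, by linarith [h.2, Real.pi_gt_three]⟩
  · exact ⟨by linarith [h.1, Real.pi_gt_three], h.2⟩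

lemma suppLine_convex (s : ℝ) : Convex ℝ (suppLine K s) := by
  intro p hp q hq a b ha hb hab
  have : dotp (a • p + b • q) (uvec s) = a * dotp p (uvec s) + b * dotp q (uvec s) := by
    simp only [dotp, PiLp.add_apply, PiLp.smul_apply, smul_eq_mul]
    ring
  simp only [suppLine, mem_setOf_eq] at hp hq ⊢
  rw [this, hp, hq, ← add_mul, hab, one_mul]

lemma edge_preconnected (hK : IsCap ω K) (s : ℝ) : IsPreconnected (edge K s) :=
  (hK.1.2.2.inter (suppLine_convex s)).isPreconnected

lemma edge_stable (hK : IsCap ω K) {W : Set Pt} (hW : IsOpen W) (s0 : ℝ) :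
    ∃ δ : ℝ, 0 < δ ∧ (edge K s0 ⊆ W → ∀ s1, |s1 - s0| < δ → edge K s1 ⊆ W) := by
  by_cases hsub : edge K s0 ⊆ W
  swap
  · exact ⟨1, one_pos, fun h => absurd h hsub⟩
  by_contra hc
  push_neg at hc
  have hc' : ∀ δ : ℝ, 0 < δ → ∃ s1, |s1 - s0| < δ ∧ ∃ q ∈ edge K s1, q ∉ W := by
    intro δ hδ
    obtain ⟨s1, hs1, hq⟩ := (hc δ hδ).2
    rw [Set.not_subset] at hq
    obtain ⟨q, hq1, hq2⟩ := hq
    exact ⟨s1, hs1, q, hq1, hq2⟩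
  have hseq : ∀ n : ℕ, ∃ s1, |s1 - s0| < 1/(n+1) ∧ ∃ q ∈ edge K s1, q ∉ W := by
    intro n
    exact hc' _ (by positivity)
  choose sn hsn qn hqn hqnW using hseq
  have hsntend : Tendsto sn atTop (𝓝 s0) := by
    have h1 : Tendsto (fun n => sn n - s0) atTop (𝓝 0) :=
      squeeze_zero_norm (fun n => by
        rw [Real.norm_eq_abs]; exact le_of_lt (hsn n))
        tendsto_one_div_add_atTop_nhds_zero_nat
    simpa using h1.add_const s0
  have hqnK : ∀ n, qn n ∈ K := fun n => (hqn n).1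
  obtain ⟨q, hqK, φ, hφmono, hφtend⟩ := hK.1.2.1.tendsto_subseq hqnK
  have hqedge : q ∈ edge K s0 := by
    refine ⟨hqK, ?_⟩
    have h1 : Tendsto (fun n => dotp (qn (φ n)) (uvec (sn (φ n)))) atTop
        (𝓝 (dotp q (uvec s0))) :=
      tendsto_dotp_pair hφtend (hsntend.comp hφmono.tendsto_atTop)
    have h2 : Tendsto (fun n => suppFn K (sn (φ n))) atTop (𝓝 (suppFn K s0)) :=
      ((suppFn_cont hK).tendsto s0).comp (hsntend.comp hφmono.tendsto_atTop)
    have heq : (fun n => dotp (qn (φ n)) (uvec (sn (φ n)))) =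
        fun n => suppFn K (sn (φ n)) := by
      funext n
      exact (hqn (φ n)).2
    rw [heq] at h1
    exact tendsto_nhds_unique h1 h2
  have hqW : q ∈ W := hsub hqedge
  have hev := hφtend.eventually (hW.mem_nhds hqW)
  obtain ⟨n, hn⟩ := hev.exists
  exact hqnW (φ n) hn

lemma upperBoundary_subset (s : ℝ) (hs : s ∈ Icc (0:ℝ) (ω + π/2)) :
    edge K s ⊆ upperBoundary ω K := by
  intro q hq
  simp only [upperBoundary, mem_iUnion, exists_prop]
  exact ⟨s, hs, hq⟩

lemma upperBoundary_preconnected (hK : IsCap ω K) (hω : ω ∈ Ioc 0 (π/2)) :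
    IsPreconnected (upperBoundary ω K) := by
  intro U V hU hV hcov hneU hneV
  by_contra hempty
  rw [Set.not_nonempty_iff_eq_empty] at hempty
  choose δu hδu0 hδu using edge_stable hK hU
  choose δv hδv0 hδv using edge_stable hK hV
  set OU := ⋃ s0 ∈ {s : ℝ | edge K s ⊆ U}, Metric.ball s0 (δu s0) with hOUdef
  set OV := ⋃ s0 ∈ {s : ℝ | edge K s ⊆ V}, Metric.ball s0 (δv s0) with hOVdef
  have hOU : IsOpen OU := isOpen_biUnion (fun _ _ => Metric.isOpen_ball)
  have hOV : IsOpen OV := isOpen_biUnion (fun _ _ => Metric.isOpen_ball)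
  have hedgeUV : ∀ s ∈ Icc (0:ℝ) (ω + π/2), edge K s ⊆ U ∨ edge K s ⊆ V := by
    intro s hs
    have hsub : edge K s ⊆ U ∪ V := fun q hq => hcov (upperBoundary_subset s hs hq)
    by_contra hboth
    push_neg at hboth
    obtain ⟨h1, h2⟩ := hboth
    rw [Set.not_subset] at h1 h2
    obtain ⟨q1, hq1e, hq1U⟩ := h1
    obtain ⟨q2, hq2e, hq2V⟩ := h2
    have hq1V : q1 ∈ V := (hsub hq1e).resolve_left hq1U
    have hq2U : q2 ∈ U := (hsub hq2e).resolve_right hq2V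
    obtain ⟨z, hz⟩ := edge_preconnected hK s U V hU hV hsub ⟨q2, hq2e, hq2U⟩ ⟨q1, hq1e, hq1V⟩
    have : z ∈ upperBoundary ω K ∩ (U ∩ V) :=
      ⟨upperBoundary_subset s hs hz.1, hz.2⟩
    rw [hempty] at this
    exact this
  have hIcov : Icc (0:ℝ) (ω + π/2) ⊆ OU ∪ OV := by
    intro s hs
    rcases hedgeUV s hs with h | h
    · left
      rw [hOUdef]
      simp only [mem_iUnion, exists_prop, mem_setOf_eq]
      exact ⟨s, h, Metric.mem_ball_self (hδu0 s)⟩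
    · right
      rw [hOVdef]
      simp only [mem_iUnion, exists_prop, mem_setOf_eq]
      exact ⟨s, h, Metric.mem_ball_self (hδv0 s)⟩
  have hedge_of_mem : ∀ {p : Pt}, p ∈ upperBoundary ω K →
      ∃ s ∈ Icc (0:ℝ) (ω + π/2), p ∈ edge K s := by
    intro p hp
    simpa only [upperBoundary, mem_iUnion, exists_prop] using hp
  have hIU : (Icc (0:ℝ) (ω + π/2) ∩ OU).Nonempty := by
    obtain ⟨p, hpB, hpU⟩ := hneU
    obtain ⟨s, hs, hpe⟩ := hedge_of_mem hpB
    have hsU : edge K s ⊆ U := by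
      rcases hedgeUV s hs with h | h
      · exact h
      · exfalso
        have : p ∈ upperBoundary ω K ∩ (U ∩ V) := ⟨hpB, hpU, h hpe⟩
        rw [hempty] at this
        exact this
    refine ⟨s, hs, ?_⟩
    rw [hOUdef]
    simp only [mem_iUnion, exists_prop, mem_setOf_eq]
    exact ⟨s, hsU, Metric.mem_ball_self (hδu0 s)⟩
  have hIV : (Icc (0:ℝ) (ω + π/2) ∩ OV).Nonempty := by
    obtain ⟨p, hpB, hpV⟩ := hneV
    obtain ⟨s, hs, hpe⟩ := hedge_of_mem hpB
    have hsV : edge K s ⊆ V := by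
      rcases hedgeUV s hs with h | h
      · exfalso
        have : p ∈ upperBoundary ω K ∩ (U ∩ V) := ⟨hpB, h hpe, hpV⟩
        rw [hempty] at this
        exact this
      · exact h
    refine ⟨s, hs, ?_⟩
    rw [hOVdef]
    simp only [mem_iUnion, exists_prop, mem_setOf_eq]
    exact ⟨s, hsV, Metric.mem_ball_self (hδv0 s)⟩
  obtain ⟨z, hzI, hzU, hzV⟩ := isPreconnected_Icc OU OV hOU hOV hIcov hIU hIV
  simp only [hOUdef, hOVdef, mem_iUnion, exists_prop, mem_setOf_eq] at hzU hzV
  obtain ⟨su, hsuU, hzu⟩ := hzU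
  obtain ⟨sv, hsvV, hzv⟩ := hzV
  have hzuU : edge K z ⊆ U := by
    apply hδu su hsuU z
    rw [Metric.mem_ball, Real.dist_eq] at hzu
    exact hzu
  have hzvV : edge K z ⊆ V := by
    apply hδv sv hsvV z
    rw [Metric.mem_ball, Real.dist_eq] at hzv
    exact hzv
  obtain ⟨q, hq⟩ := edge_nonempty hK z
  have : q ∈ upperBoundary ω K ∩ (U ∩ V) :=
    ⟨upperBoundary_subset z hzI hq, hzuU hq, hzvV hq⟩
  rw [hempty] at this
  exact this

lemma edge0_bot_not_in_niche (hK : IsCap ω K) (hω : ω ∈ Ioc 0 (π/2)) {q : Pt}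
    (hq : q ∈ edge K 0) : q ∉ niche ω K := by
  intro hn
  obtain ⟨hfan, t', ht', h1, h2⟩ := niche_elim hn
  exact absurd hq.2 (ne_of_lt (low_lt hK hω ht'.1 ht'.2 (le_refl 0) ht'.1 hfan.1 h1))

lemma edgetop_not_in_niche (hK : IsCap ω K) (hω : ω ∈ Ioc 0 (π/2)) {q : Pt}
    (hq : q ∈ edge K (ω + π/2)) : q ∉ niche ω K := by
  intro hn
  obtain ⟨hfan, t', ht', h1, h2⟩ := niche_elim hn
  have := high_lt hK hω ht'.1 ht'.2 (by linarith [ht'.2]) (le_refl (ω + π/2)) hfan.2 h2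
  exact absurd hq.2 (ne_of_lt this)

lemma st2_to_st4 (hK : IsCap ω K) (hω : ω ∈ Ioc 0 (π/2))
    (st2 : niche ω K ⊆ K \ upperBoundary ω K) : IsConnected (K \ niche ω K) := by
  classical
  set B := upperBoundary ω K with hBdef
  have hBK : B ⊆ K := by
    intro q hq
    obtain ⟨s, _, hqe⟩ : ∃ s ∈ Icc (0:ℝ) (ω + π/2), q ∈ edge K s := by
      simpa only [hBdef, upperBoundary, mem_iUnion, exists_prop] using hq
    exact hqe.1
  have hBsub : B ⊆ K \ niche ω K := by
    intro q hq
    refine ⟨hBK hq, fun hn => ?_⟩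
    exact (st2 hn).2 hq
  obtain ⟨b0, hb0e⟩ := edge_nonempty hK 0
  have hb0B : b0 ∈ B := upperBoundary_subset 0
    ⟨le_refl 0, by linarith [hω.1, Real.pi_gt_three]⟩ hb0e
  have hBpre := upperBoundary_preconnected hK hω
  have htop : ∀ p ∈ K \ niche ω K, ∃ q : Pt, q ∈ B ∧ segment ℝ p q ⊆ K \ niche ω K := by
    intro p hp
    obtain ⟨κ, hκ0, hκB, hκK⟩ := exists_top hK hω hp.1
    refine ⟨p + κ • uvec (π/2), hκB, ?_⟩
    intro z hz
    rw [segment_eq_image'] at hz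
    obtain ⟨θ, hθ, rfl⟩ := hz
    show p + θ • (p + κ • uvec (π/2) - p) ∈ K \ niche ω K
    have hident : p + θ • (p + κ • uvec (π/2) - p) = p + (θ * κ) • uvec (π/2) := by
      rw [add_sub_cancel_left, smul_smul]
    rw [hident]
    have hμ0 : 0 ≤ θ * κ := mul_nonneg hθ.1 hκ0
    have hμκ : θ * κ ≤ κ := by nlinarith [hθ.2]
    refine ⟨hκK _ hμ0 hμκ, fun hn => ?_⟩
    obtain ⟨hfan, t', ht', h1, h2⟩ := niche_elim hn
    have hpQ : p ∈ Qminus K t' := qminus_down hω ht' hμ0 ⟨h1, h2⟩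
    have hpfan : p ∈ fan ω := K_sub_fan hK hp.1
    apply hp.2
    refine ⟨hpfan, ?_⟩
    simp only [mem_iUnion, exists_prop]
    exact ⟨t', ht', hpQ⟩
  choose! topf htopB htopseg using htop
  have hcup : K \ niche ω K = ⋃₀ ((fun p => segment ℝ p (topf p) ∪ B) '' (K \ niche ω K)) := by
    apply Set.Subset.antisymm
    · intro p hp
      exact ⟨segment ℝ p (topf p) ∪ B, ⟨p, hp, rfl⟩, Or.inl (left_mem_segment ℝ p (topf p))⟩
    · rintro z ⟨C, ⟨p, hp, rfl⟩, hz⟩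
      rcases hz with hz | hz
      · exact htopseg p hp hz
      · exact hBsub hz
  constructor
  · exact ⟨b0, hBsub hb0B⟩
  · rw [hcup]
    apply isPreconnected_sUnion b0
    · rintro C ⟨p, hp, rfl⟩
      exact Or.inr hb0B
    · rintro C ⟨p, hp, rfl⟩
      apply IsPreconnected.union (topf p)
      · exact right_mem_segment ℝ p (topf p)
      · exact htopB p hp
      · exact (convex_segment p (topf p)).isPreconnected
      · exact hBpre

end CapAux
namespace CapAux

variable {ω : ℝ} {K : Set Pt}

lemma st4_to_st3 (hK : IsCap ω K) (hω : ω ∈ Ioc 0 (π/2))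
    (st4 : IsConnected (K \ niche ω K)) :
    ∀ t ∈ Ioo 0 ω, innerCorner K t ∉ interior (fan ω) ∨ innerCorner K t ∈ K := by
  intro t ht
  by_contra hcon
  push_neg at hcon
  obtain ⟨hxint, hxK⟩ := hcon
  obtain ⟨hxω, hxπ⟩ := int_fan_pos hxint
  set x := innerCorner K t with hxdef
  have hX : dotp x (uvec t) = suppFn K t - 1 := by
    rw [hxdef, corner_dot]
    simp
  have hY : dotp x (uvec (t + π/2)) = suppFn K (t + π/2) - 1 := by
    rw [hxdef, corner_dot, show t + π/2 - t = π/2 by ring]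
    simp
  obtain ⟨s0, hs0S, hs0v⟩ := notMem_K_elim hK hxK
  have hmid : t ≤ s0 ∧ s0 ≤ t + π/2 := by
    rcases hs0S with hJ | hrest
    · rcases hJ with ⟨h0, hω'⟩ | ⟨hπ', hωπ⟩
      · constructor
        · by_contra hlt
          push_neg at hlt
          have := low_le hK hω ht.1 ht.2 h0 hlt (le_of_lt hxω) (le_of_eq hX)
          linarith
        · linarith [hω.2, ht.1, Real.pi_gt_three]
      · constructor
        · linarith [ht.2, hω.2]
        · by_contra hgt
          push_neg at hgt
          have := high_le hK hω ht.1 ht.2 hgt hωπ (le_of_lt hxπ) (le_of_eq hY)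
          linarith
    · exfalso
      rcases hrest with h | h
      · rw [h, dotp_pi_shift, hK.2.2.2.1] at hs0v
        linarith
      · rw [mem_singleton_iff] at h
        rw [h, hK.2.2.2.2.1, three_pi_half, dotp_pi_shift] at hs0v
        linarith
  obtain ⟨hts0, hs0tp⟩ := hmid
  have hcos : 0 ≤ Real.cos (s0 - t) := by
    apply Real.cos_nonneg_of_mem_Icc
    constructor
    · linarith [Real.pi_gt_three]
    · linarith
  have hsin : 0 ≤ Real.sin (s0 - t) := by
    apply Real.sin_nonneg_of_nonneg_of_le_pi
    · linarith
    · linarith [Real.pi_gt_three]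
  set γ := dotp x (uvec s0) - suppFn K s0 with hγdef
  have hγ : 0 < γ := by
    rw [hγdef]
    linarith
  set U := {q : Pt | suppFn K t - 1 - γ/4 < dotp q (uvec t)} with hUdef
  set V := {q : Pt | suppFn K (t + π/2) - 1 - γ/4 < dotp q (uvec (t + π/2))} with hVdef
  have hUopen : IsOpen U := isOpen_lt continuous_const (continuous_dotp _)
  have hVopen : IsOpen V := isOpen_lt continuous_const (continuous_dotp _)
  have hcover : K \ niche ω K ⊆ U ∪ V := by
    intro q hq
    have hqfan := K_sub_fan hK hq.1
    have hqQ : q ∉ Qminus K t := by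
      intro hQ
      apply hq.2
      refine ⟨hqfan, ?_⟩
      simp only [mem_iUnion, exists_prop]
      exact ⟨t, ht, hQ⟩
    rw [Qminus, mem_setOf_eq, not_and_or] at hqQ
    rcases hqQ with h | h
    · left
      push_neg at h
      rw [hUdef, mem_setOf_eq]
      linarith
    · right
      push_neg at h
      rw [hVdef, mem_setOf_eq]
      linarith
  obtain ⟨q0, hq0⟩ := edge_nonempty hK 0
  obtain ⟨qt, hqt⟩ := edge_nonempty hK (ω + π/2)
  have hq0mem : q0 ∈ (K \ niche ω K) ∩ U := by
    refine ⟨⟨hq0.1, edge0_bot_not_in_niche hK hω hq0⟩, ?_⟩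
    rw [hUdef, mem_setOf_eq]
    have := e0_bound hK hω ht hq0
    linarith
  have hqtmem : qt ∈ (K \ niche ω K) ∩ V := by
    refine ⟨⟨hqt.1, edgetop_not_in_niche hK hω hqt⟩, ?_⟩
    rw [hVdef, mem_setOf_eq]
    have := etop_bound hK hω ht hqt
    linarith
  obtain ⟨z, hzKN, hzU, hzV⟩ := st4.2 U V hUopen hVopen hcover
    ⟨q0, hq0mem⟩ ⟨qt, hqtmem⟩
  rw [hUdef, mem_setOf_eq] at hzU
  rw [hVdef, mem_setOf_eq] at hzV
  have hzs := dotp_le_suppFn hK hzKN.1 s0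
  have hexp := expand_mid z t s0
  have hcor := corner_dot K t s0
  rw [← hxdef] at hcor
  have hc1 : Real.cos (s0 - t) ≤ 1 := Real.cos_le_one _
  have hs1 : Real.sin (s0 - t) ≤ 1 := Real.sin_le_one _
  have e1 : Real.cos (s0 - t) * (suppFn K t - 1 - γ/4) ≤ Real.cos (s0 - t) * dotp z (uvec t) :=
    mul_le_mul_of_nonneg_left (le_of_lt hzU) hcos
  have e2 : Real.sin (s0 - t) * (suppFn K (t + π/2) - 1 - γ/4)
      ≤ Real.sin (s0 - t) * dotp z (uvec (t + π/2)) :=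
    mul_le_mul_of_nonneg_left (le_of_lt hzV) hsin
  have e3 : 0 ≤ γ * (2 - Real.cos (s0 - t) - Real.sin (s0 - t)) :=
    mul_nonneg (le_of_lt hγ) (by linarith)
  nlinarith

end CapAux
open CapAux in
theorem stmt_4 (ω : ℝ) (hω : ω ∈ Ioc 0 (π/2)) (K : Set Pt) (hK : IsCap ω K) :
    List.TFAE [niche ω K ⊆ K,
               niche ω K ⊆ K \ upperBoundary ω K,
               ∀ t ∈ Ioo 0 ω, innerCorner K t ∉ interior (fan ω) ∨ innerCorner K t ∈ K,
               IsConnected (K \ niche ω K)] := by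
  tfae_have 2 → 1 := fun h2 p hp => (h2 hp).1
  tfae_have 1 → 3 := st1_to_st3 hK hω
  tfae_have 3 → 2 := st3_to_st2 hK hω
  tfae_have 2 → 4 := st2_to_st4 hK hω
  tfae_have 4 → 3 := st4_to_st3 hK hω
  tfae_finish
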